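/- Let k be a positive integer and define h_k(x) := ∑_{j=0}^{k} C(k,j)² (1−x)^{(2k−1)(k−j)/k} x^{(2k−1)j/k}. Then h_k is twice differentiable on (0,1) and for every x ∈ (0,1) it satisfies ã_k(x) h_k''(x) + b̃_k(x) h_k'(x) + (2k−1) c̃_k(x) h_k(x) = 0, where ã_k(x) := (1−x)²x²((1−x)^{2−1/k} − x^{2−1/k})², b̃_k(x) := (1−x)x((1−x)^{2−1/k} − x^{2−1/k})·((1−x)^{2−1/k}(1+4(k−1)x) + x^{2−1/k}(1+4(k−1)(1−x))), and c̃_k(x) := (1−x)^{4−2/k} x (1+2(k−1)x) + x^{4−2/k} (1−x)(1+2(k−1)(1−x)) − (1−x)^{2−1/k} x^{2−1/k} (2k−1 − 4(k−1)(1−x)x). -/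

import Mathlib

noncomputable def hkA (kr e q : ℝ) : ℝ :=
  ((2*kr-1)/kr)^2*(e-kr*q)^2 - ((2*kr-1)/kr)*(e*(1-q)^2+(kr-e)*q^2)
  + ((2*kr-1)/kr)*(e-kr*q)*(1+4*(kr-1)*q) + (2*kr-1)*q*(1+2*(kr-1)*q)

noncomputable def hkB (kr e q : ℝ) : ℝ :=
  -2*((2*kr-1)/kr)^2*(e-kr*q)^2 + 2*((2*kr-1)/kr)*(e*(1-q)^2+(kr-e)*q^2)
  + 4*((2*kr-1)/kr)*(kr-1)*(e-kr*q)*((1-q)-q) - (2*kr-1)*((2*kr-1)-4*(kr-1)*(1-q)*q)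

noncomputable def hkC (kr e q : ℝ) : ℝ :=
  ((2*kr-1)/kr)^2*(e-kr*q)^2 - ((2*kr-1)/kr)*(e*(1-q)^2+(kr-e)*q^2)
  - ((2*kr-1)/kr)*(e-kr*q)*(1+4*(kr-1)*(1-q)) + (2*kr-1)*(1-q)*(1+2*(kr-1)*(1-q))

lemma hk_star (kr e q : ℝ) (hk : kr ≠ 0) :
    (kr-e)^2*(kr-e-1)^2 * hkA kr (e+2) q + (e+2)^2*(kr-e)^2 * hkB kr (e+1) q
      + (e+2)^2*(e+1)^2 * hkC kr e q = 0 := by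
  unfold hkA hkB hkC
  field_simp
  ring

lemma hk_A0 (kr q : ℝ) (hk : kr ≠ 0) : hkA kr 0 q = 0 := by
  unfold hkA; field_simp; ring

lemma hk_K1 (kr q : ℝ) (hk : kr ≠ 0) : kr^2 * hkA kr 1 q + hkB kr 0 q = 0 := by
  unfold hkA hkB; field_simp; ring

lemma hk_choose_step (k i : ℕ) (hik : i ≤ k) (hk0 : (k:ℝ) ≠ 0) (q : ℝ) :
    ((k.choose (i+2) : ℝ))^2 * hkA k (↑(i+2)) q + ((k.choose (i+1) : ℝ))^2 * hkB k (↑(i+1)) q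
      + ((k.choose i : ℝ))^2 * hkC k i q = 0 := by
  have R1 : (k.choose (i+1) : ℝ) * ((i:ℝ)+1) = (k.choose i : ℝ) * ((k:ℝ) - i) := by
    have h' := congrArg (fun n : ℕ => (n : ℝ)) (Nat.choose_succ_right_eq k i)
    push_cast [Nat.cast_sub hik] at h'
    exact h'
  have R2 : (k.choose (i+2) : ℝ) * ((i:ℝ)+2) = (k.choose (i+1) : ℝ) * ((k:ℝ) - i - 1) := by
    rcases eq_or_lt_of_le hik with rfl | hlt
    · rw [Nat.choose_eq_zero_of_lt (by omega), Nat.choose_eq_zero_of_lt (by omega)]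
      simp
    · have h' := congrArg (fun n : ℕ => (n : ℝ)) (Nat.choose_succ_right_eq k (i+1))
      push_cast [Nat.cast_sub (by omega : i + 1 ≤ k)] at h'
      convert h' using 2 <;> ring
  have S := hk_star (k:ℝ) (i:ℝ) q hk0
  have key : (((i:ℝ)+1)*((i:ℝ)+2))^2 *
      (((k.choose (i+2) : ℝ))^2 * hkA k (↑(i+2)) q + ((k.choose (i+1) : ℝ))^2 * hkB k (↑(i+1)) q
        + ((k.choose i : ℝ))^2 * hkC k i q) = 0 := by
    push_cast
    linear_combination (hkA (k:ℝ) ((i:ℝ)+2) q * ((i:ℝ)+1)^2 *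
        (((i:ℝ)+2)*(k.choose (i+2) : ℝ) + ((k:ℝ)-(i:ℝ)-1)*(k.choose (i+1) : ℝ))) * R2
      + ((hkB (k:ℝ) ((i:ℝ)+1) q * ((i:ℝ)+2)^2 + hkA (k:ℝ) ((i:ℝ)+2) q * ((k:ℝ)-(i:ℝ)-1)^2) *
        (((i:ℝ)+1)*(k.choose (i+1) : ℝ) + ((k:ℝ)-(i:ℝ))*(k.choose i : ℝ))) * R1
      + ((k.choose i : ℝ))^2 * S
  have hne : ((((i:ℝ)+1)*((i:ℝ)+2))^2 : ℝ) ≠ 0 := by positivity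
  exact (mul_eq_zero.mp key).resolve_left hne

lemma hk_sum_shift_vanish (k : ℕ) (u v w g : ℕ → ℝ)
    (hu1 : u (k+1) = 0) (hu2 : u (k+1+1) = 0) (hv1 : v (k+1) = 0)
    (h0 : u 0 = 0) (h1 : u 1 + v 0 = 0) (hm : ∀ i ≤ k, u (i+1+1) + v (i+1) + w i = 0) :
    ∑ j ∈ Finset.range (k+1), (u j * g j + v j * g (j+1) + w j * g (j+2)) = 0 := by
  set V : ℕ → ℝ := fun m => if m = 0 then 0 else v (m-1) with hV
  set W : ℕ → ℝ := fun m => if m ≤ 1 then 0 else w (m-2) with hW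
  have eu : ∑ j ∈ Finset.range (k+1), u j * g j = ∑ m ∈ Finset.range (k+1+1+1), u m * g m := by
    rw [Finset.sum_range_succ (fun m => u m * g m) (k+1+1),
        Finset.sum_range_succ (fun m => u m * g m) (k+1), hu1, hu2]
    ring
  have ev : ∑ j ∈ Finset.range (k+1), v j * g (j+1)
      = ∑ m ∈ Finset.range (k+1+1+1), V m * g m := by
    rw [Finset.sum_range_succ' (fun m => V m * g m) (k+1+1)]
    simp only [hV, Nat.succ_ne_zero, if_false, Nat.add_sub_cancel, if_pos rfl]
    rw [Finset.sum_range_succ (fun i => v i * g (i+1)) (k+1), hv1]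
    ring
  have ew : ∑ j ∈ Finset.range (k+1), w j * g (j+2)
      = ∑ m ∈ Finset.range (k+1+1+1), W m * g m := by
    rw [Finset.sum_range_succ' (fun m => W m * g m) (k+1+1),
        Finset.sum_range_succ' (fun i => W (i+1) * g (i+1)) (k+1)]
    simp only [hW, show ∀ i:ℕ, ¬(i+1+1 ≤ 1) from fun i => by omega, if_false,
      show ∀ i:ℕ, i+1+1-2 = i from fun i => by omega, show (0:ℕ)+1 = 1 from rfl,
      if_pos (le_refl 1), if_pos (Nat.zero_le 1), show ∀ i:ℕ, i+1+1 = i+2 from fun i => rfl]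
    ring
  rw [Finset.sum_add_distrib, Finset.sum_add_distrib, eu, ev, ew,
    ← Finset.sum_add_distrib, ← Finset.sum_add_distrib]
  apply Finset.sum_eq_zero
  intro m hm'
  have hz : u m + V m + W m = 0 := by
    match m with
    | 0 => simpa [hV, hW] using h0
    | 1 => simpa [hV, hW] using h1
    | (i+2) =>
      have hik : i ≤ k := by
        have := Finset.mem_range.mp hm'; omega
      have := hm i hik
      simp only [hV, hW, show ∀ i:ℕ, ¬(i+2 = 0) from fun i => by omega,
        show ∀ i:ℕ, ¬(i+2 ≤ 1) from fun i => by omega, if_false,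
        show ∀ i:ℕ, i+2-1 = i+1 from fun i => by omega,
        show ∀ i:ℕ, i+2-2 = i from fun i => by omega]
      linarith [this]
  calc u m * g m + V m * g m + W m * g m = (u m + V m + W m) * g m := by ring
  _ = 0 := by rw [hz]; ring

noncomputable def hkE (k j : ℕ) : ℝ := (2*(k:ℝ)-1) * ((k:ℝ)-(j:ℝ))/(k:ℝ)
noncomputable def hkG (k j : ℕ) : ℝ := (2*(k:ℝ)-1) * (j:ℝ)/(k:ℝ)

noncomputable def hkF (k j : ℕ) (y : ℝ) : ℝ :=
  (Nat.choose k j : ℝ)^2 * (1-y) ^ (hkE k j) * y ^ (hkG k j)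

noncomputable def hkF1 (k j : ℕ) (y : ℝ) : ℝ :=
  (Nat.choose k j : ℝ)^2 *
    (hkG k j * ((1-y) ^ (hkE k j) * y ^ (hkG k j - 1))
     - hkE k j * ((1-y) ^ (hkE k j - 1) * y ^ (hkG k j)))

noncomputable def hkF2 (k j : ℕ) (y : ℝ) : ℝ :=
  (Nat.choose k j : ℝ)^2 *
    (hkG k j * (hkG k j - 1) * ((1-y) ^ (hkE k j) * y ^ (hkG k j - 2))
     - 2 * hkE k j * hkG k j * ((1-y) ^ (hkE k j - 1) * y ^ (hkG k j - 1))
     + hkE k j * (hkE k j - 1) * ((1-y) ^ (hkE k j - 2) * y ^ (hkG k j)))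

lemma hk_hasDerivAt_one_sub (a y : ℝ) (hy : y < 1) :
    HasDerivAt (fun z : ℝ => (1-z) ^ a) (-(a * (1-y) ^ (a-1))) y := by
  have h1 : HasDerivAt (fun z : ℝ => 1 - z) (-1) y := (hasDerivAt_id y).const_sub 1
  have h2 := h1.rpow_const (p := a) (Or.inl (by nlinarith : (1:ℝ) - y ≠ 0))
  simpa using h2

lemma hkF_hasDerivAt (k j : ℕ) (y : ℝ) (h0 : 0 < y) (h1 : y < 1) :
    HasDerivAt (hkF k j) (hkF1 k j y) y := by
  have d1 := hk_hasDerivAt_one_sub (hkE k j) y h1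
  have d2 := Real.hasDerivAt_rpow_const (x := y) (p := hkG k j) (Or.inl h0.ne')
  have := (d1.mul d2).const_mul ((Nat.choose k j : ℝ)^2)
  refine (this.congr_of_eventuallyEq (Filter.Eventually.of_forall fun z => ?_)).congr_deriv ?_
  · show hkF k j z = _; unfold hkF; simp only [Pi.mul_apply]; ring
  · unfold hkF1; ring

lemma hkF1_hasDerivAt (k j : ℕ) (y : ℝ) (h0 : 0 < y) (h1 : y < 1) :
    HasDerivAt (hkF1 k j) (hkF2 k j y) y := by
  have dA1 := hk_hasDerivAt_one_sub (hkE k j) y h1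
  have dA2 := Real.hasDerivAt_rpow_const (x := y) (p := hkG k j - 1) (Or.inl h0.ne')
  have dB1 := hk_hasDerivAt_one_sub (hkE k j - 1) y h1
  have dB2 := Real.hasDerivAt_rpow_const (x := y) (p := hkG k j) (Or.inl h0.ne')
  have dA := (dA1.mul dA2).const_mul (hkG k j)
  have dB := (dB1.mul dB2).const_mul (hkE k j)
  have := (dA.sub dB).const_mul ((Nat.choose k j : ℝ)^2)
  refine (this.congr_of_eventuallyEq (Filter.Eventually.of_forall fun z => ?_)).congr_deriv ?_
  · show hkF1 k j z = _; unfold hkF1; simp only [Pi.mul_apply, Pi.sub_apply]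
  · unfold hkF2
    rw [show hkG k j - 1 - 1 = hkG k j - 2 from by ring,
        show hkE k j - 1 - 1 = hkE k j - 2 from by ring]
    ring


/-- For a positive integer `k` and
`h_k(x) = ∑_{j=0}^{k} C(k,j)² (1−x)^{(2k−1)(k−j)/k} x^{(2k−1)j/k}`, the function
`h_k` is twice differentiable on `(0,1)` and satisfies
`ã_k(x) h_k''(x) + b̃_k(x) h_k'(x) + (2k−1) c̃_k(x) h_k(x) = 0` there. -/
theorem hk_differential_equation (k : ℕ) (hk : 0 < k)
    (h : ℝ → ℝ)
    (hh : ∀ x : ℝ, h x = ∑ j ∈ Finset.range (k + 1),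
        (Nat.choose k j : ℝ) ^ 2 *
          (1 - x) ^ ((2 * (k : ℝ) - 1) * ((k : ℝ) - j) / k) *
          x ^ ((2 * (k : ℝ) - 1) * (j : ℝ) / k)) :
    ∀ x ∈ Set.Ioo (0 : ℝ) 1,
      DifferentiableAt ℝ h x ∧ DifferentiableAt ℝ (deriv h) x ∧
      ((1 - x) ^ 2 * x ^ 2 * ((1 - x) ^ (2 - 1 / (k : ℝ)) - x ^ (2 - 1 / (k : ℝ))) ^ 2) *
          deriv (deriv h) x +
        ((1 - x) * x * ((1 - x) ^ (2 - 1 / (k : ℝ)) - x ^ (2 - 1 / (k : ℝ))) *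
          ((1 - x) ^ (2 - 1 / (k : ℝ)) * (1 + 4 * ((k : ℝ) - 1) * x) +
            x ^ (2 - 1 / (k : ℝ)) * (1 + 4 * ((k : ℝ) - 1) * (1 - x)))) * deriv h x +
        (2 * (k : ℝ) - 1) *
          ((1 - x) ^ (4 - 2 / (k : ℝ)) * x * (1 + 2 * ((k : ℝ) - 1) * x) +
            x ^ (4 - 2 / (k : ℝ)) * (1 - x) * (1 + 2 * ((k : ℝ) - 1) * (1 - x)) -
            (1 - x) ^ (2 - 1 / (k : ℝ)) * x ^ (2 - 1 / (k : ℝ)) *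
              (2 * (k : ℝ) - 1 - 4 * ((k : ℝ) - 1) * (1 - x) * x)) * h x
        = 0 := by
  intro x hx
  obtain ⟨hx0, hx1⟩ := hx
  have hp : (0:ℝ) < 1 - x := by linarith
  have hkR : (k:ℝ) ≠ 0 := Nat.cast_ne_zero.mpr hk.ne'
  have hfun : h = fun y => ∑ j ∈ Finset.range (k+1), hkF k j y := by
    funext y; rw [hh y]; rfl
  have Dh : ∀ y ∈ Set.Ioo (0:ℝ) 1,
      HasDerivAt h (∑ j ∈ Finset.range (k+1), hkF1 k j y) y := by
    intro y hy
    rw [hfun]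
    exact HasDerivAt.fun_sum fun j _ => hkF_hasDerivAt k j y hy.1 hy.2
  have hd1 : HasDerivAt h (∑ j ∈ Finset.range (k+1), hkF1 k j x) x := Dh x ⟨hx0, hx1⟩
  have hev : deriv h =ᶠ[nhds x] (fun y => ∑ j ∈ Finset.range (k+1), hkF1 k j y) :=
    Filter.eventuallyEq_of_mem (isOpen_Ioo.mem_nhds ⟨hx0, hx1⟩) (fun y hy => (Dh y hy).deriv)
  have hd2 : HasDerivAt (fun y => ∑ j ∈ Finset.range (k+1), hkF1 k j y)
      (∑ j ∈ Finset.range (k+1), hkF2 k j x) x :=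
    HasDerivAt.fun_sum fun j _ => hkF1_hasDerivAt k j x hx0 hx1
  refine ⟨hd1.differentiableAt, hev.differentiableAt_iff.mpr hd2.differentiableAt, ?_⟩
  have hder1 : deriv h x = ∑ j ∈ Finset.range (k+1), hkF1 k j x := hd1.deriv
  have hder2 : deriv (deriv h) x = ∑ j ∈ Finset.range (k+1), hkF2 k j x :=
    hev.deriv_eq.trans hd2.deriv
  have hP2 : (1-x) ^ (4 - 2/(k:ℝ)) = ((1-x) ^ (2 - 1/(k:ℝ)))^(2:ℕ) := by
    rw [show (4 - 2/(k:ℝ)) = (2 - 1/(k:ℝ)) * ((2:ℕ):ℝ) by push_cast; ring,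
      Real.rpow_mul hp.le, Real.rpow_natCast]
  have hQ2 : x ^ (4 - 2/(k:ℝ)) = (x ^ (2 - 1/(k:ℝ)))^(2:ℕ) := by
    rw [show (4 - 2/(k:ℝ)) = (2 - 1/(k:ℝ)) * ((2:ℕ):ℝ) by push_cast; ring,
      Real.rpow_mul hx0.le, Real.rpow_natCast]
  rw [hder1, hder2, hfun, hP2, hQ2]
  simp only []
  rw [Finset.mul_sum, Finset.mul_sum, Finset.mul_sum, ← Finset.sum_add_distrib,
    ← Finset.sum_add_distrib]
  set U : ℕ → ℝ := fun m => (Nat.choose k m : ℝ)^2 * hkA (k:ℝ) (m:ℝ) x with hU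
  set V : ℕ → ℝ := fun m => (Nat.choose k m : ℝ)^2 * hkB (k:ℝ) (m:ℝ) x with hV
  set W : ℕ → ℝ := fun m => (Nat.choose k m : ℝ)^2 * hkC (k:ℝ) (m:ℝ) x with hW
  set G : ℕ → ℝ := fun m => ((1-x) ^ (2 - 1/(k:ℝ)))^(k+2-m) * (x ^ (2 - 1/(k:ℝ)))^m with hG
  have hu1 : U (k+1) = 0 := by
    simp only [hU]; rw [Nat.choose_eq_zero_of_lt (by omega)]; norm_num
  have hu2 : U (k+1+1) = 0 := by
    simp only [hU]; rw [Nat.choose_eq_zero_of_lt (by omega)]; norm_num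
  have hv1 : V (k+1) = 0 := by
    simp only [hV]; rw [Nat.choose_eq_zero_of_lt (by omega)]; norm_num
  have h0 : U 0 = 0 := by
    simp only [hU, Nat.choose_zero_right, Nat.cast_zero, Nat.cast_one]
    rw [hk_A0 (k:ℝ) x hkR]; ring
  have h1 : U 1 + V 0 = 0 := by
    simp only [hU, hV, Nat.choose_zero_right, Nat.choose_one_right, Nat.cast_zero, Nat.cast_one]
    linear_combination hk_K1 (k:ℝ) x hkR
  have hm : ∀ i ≤ k, U (i+1+1) + V (i+1) + W i = 0 := by
    intro i hik
    simp only [hU, hV, hW]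
    have := hk_choose_step k i hik hkR x
    convert this using 3
  refine Eq.trans (Finset.sum_congr rfl ?_) (hk_sum_shift_vanish k U V W G hu1 hu2 hv1 h0 h1 hm)
  intro j hj
  have hjk : j ≤ k := by have := Finset.mem_range.mp hj; omega
  have hEj : hkE k j = (2 - 1/(k:ℝ)) * ((k:ℝ)-(j:ℝ)) := by
    unfold hkE; field_simp
  have hGj : hkG k j = (2 - 1/(k:ℝ)) * (j:ℝ) := by
    unfold hkG; field_simp
  have e1 : (1-x) ^ (hkE k j) = ((1-x)^(2-1/(k:ℝ)))^(k-j : ℕ) := by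
    rw [hEj, show ((k:ℝ)-(j:ℝ)) = ((k-j:ℕ):ℝ) from by push_cast [Nat.cast_sub hjk]; ring,
      Real.rpow_mul hp.le, Real.rpow_natCast]
  have e2 : (1-x) ^ (hkE k j - 1) = ((1-x)^(2-1/(k:ℝ)))^(k-j : ℕ) / (1-x) := by
    rw [Real.rpow_sub hp, e1, Real.rpow_one]
  have e3 : (1-x) ^ (hkE k j - 2) = ((1-x)^(2-1/(k:ℝ)))^(k-j : ℕ) / (1-x)^(2:ℕ) := by
    rw [Real.rpow_sub hp, e1, show (2:ℝ) = ((2:ℕ):ℝ) from by norm_num, Real.rpow_natCast]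
  have q1 : x ^ (hkG k j) = (x^(2-1/(k:ℝ)))^(j : ℕ) := by
    rw [hGj, Real.rpow_mul hx0.le, Real.rpow_natCast]
  have q2 : x ^ (hkG k j - 1) = (x^(2-1/(k:ℝ)))^(j : ℕ) / x := by
    rw [Real.rpow_sub hx0, q1, Real.rpow_one]
  have q3 : x ^ (hkG k j - 2) = (x^(2-1/(k:ℝ)))^(j : ℕ) / x^(2:ℕ) := by
    rw [Real.rpow_sub hx0, q1, show (2:ℝ) = ((2:ℕ):ℝ) from by norm_num, Real.rpow_natCast]
  simp only [hU, hV, hW, hG]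
  unfold hkF hkF1 hkF2
  rw [e1, e2, e3, q1, q2, q3, hEj, hGj]
  rw [show k+2-j = (k-j)+2 from by omega, show k+2-(j+1) = (k-j)+1 from by omega,
    show k+2-(j+2) = k-j from by omega]
  unfold hkA hkB hkC
  have hx0' : x ≠ 0 := hx0.ne'
  have hp' : (1:ℝ) - x ≠ 0 := hp.ne'
  field_simp
  ring
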